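/- (Two-party corollary.) Let W be a process on two parties A', B' and Z a process on two parties A'', B''. The product P = W ⊗ Z for the combined parties A = A'A'' and B = B'B'' is NOT a valid process if and only if: (1) both W and Z contain nonzero signalling terms; and (2) the Hilbert–Schmidt terms of W and Z taken together contain signalling terms of both directions (i.e., at least one A-to-B signalling term and at least one B-to-A signalling term among the nonzero terms of W and Z). -/

import Mathlib

open Matrix Kronecker BigOperators
open scoped ComplexOrder

namespace ProcessPaper

/-- A (generalized) Hilbert–Schmidt basis of operators on a finite-dimensional Hilbert
space with orthonormal basis indexed by `n`: a family of Hermitian matrices indexed by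
`ι` (with `Fintype.card ι = (Fintype.card n) ^ 2`), whose distinguished element `σ 0`
is the identity, whose other elements are traceless, which are mutually orthogonal
under the trace inner product, and which are all nonzero. -/
def IsHSBasis {n : Type*} [Fintype n] [DecidableEq n] {ι : Type*} [Fintype ι] [Zero ι]
    (σ : ι → Matrix n n ℂ) : Prop :=
  Fintype.card ι = (Fintype.card n) ^ 2 ∧
  (∀ i, (σ i).IsHermitian) ∧
  σ 0 = 1 ∧
  (∀ i, i ≠ 0 → (σ i).trace = 0) ∧
  (∀ i j, i ≠ j → (σ i * σ j).trace = 0) ∧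
  (∀ i, σ i ≠ 0)

variable {P : Type*} [Fintype P] [DecidableEq P]

section defs

variable {I O : P → Type*} [∀ p, Fintype (I p)] [∀ p, DecidableEq (I p)]
  [∀ p, Fintype (O p)] [∀ p, DecidableEq (O p)]
  {ιI ιO : P → Type*} [∀ p, Fintype (ιI p)] [∀ p, Zero (ιI p)]
  [∀ p, Fintype (ιO p)] [∀ p, Zero (ιO p)]

/-- The tensor product, over all parties, of party-local operators
(each party `p` carries the Hilbert space of its input system `I p`
tensored with its output system `O p`). -/
def tensorFamily (M : ∀ p, Matrix (I p × O p) (I p × O p) ℂ) :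
    Matrix ((p : P) → I p × O p) ((p : P) → I p × O p) ℂ :=
  fun x y => ∏ p, M p (x p) (y p)

/-- The Hilbert–Schmidt basis term with multi-index `t`:
`⨂_p σI p (t p).1 ⊗ σO p (t p).2`. -/
def hsTerm (σI : ∀ p, ιI p → Matrix (I p) (I p) ℂ)
    (σO : ∀ p, ιO p → Matrix (O p) (O p) ℂ)
    (t : ∀ p, ιI p × ιO p) :
    Matrix ((p : P) → I p × O p) ((p : P) → I p × O p) ℂ :=
  fun x y => ∏ p, σI p (t p).1 (x p).1 (y p).1 * σO p (t p).2 (x p).2 (y p).2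

/-- The operator with Hilbert–Schmidt coefficients `w`. -/
noncomputable def expand (σI : ∀ p, ιI p → Matrix (I p) (I p) ℂ)
    (σO : ∀ p, ιO p → Matrix (O p) (O p) ℂ)
    (w : (∀ p, ιI p × ιO p) → ℝ) :
    Matrix ((p : P) → I p × O p) ((p : P) → I p × O p) ℂ :=
  ∑ t : ∀ p, ιI p × ιO p, (w t : ℂ) • hsTerm σI σO t

end defs

section types

variable {ιI ιO : P → Type*} [∀ p, Zero (ιI p)] [∀ p, Zero (ιO p)]

/-- A term is trivial on party `p` if its indices on both the input and the output
system of `p` are zero (identity factor on party `p`). -/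
def TrivialAt (t : ∀ p, ιI p × ιO p) (p : P) : Prop :=
  (t p).1 = 0 ∧ (t p).2 = 0

/-- A term is in type on party `p` if it is nontrivial on the input system of `p`
and trivial (identity) on the output system of `p`. -/
def InTypeAt (t : ∀ p, ιI p × ιO p) (p : P) : Prop :=
  (t p).1 ≠ 0 ∧ (t p).2 = 0

/-- A term includes the out type on party `p` if it is nontrivial on the output
system of `p`. -/
def IncludesOutAt (t : ∀ p, ιI p × ιO p) (p : P) : Prop :=
  (t p).2 ≠ 0

/-- A term is nontrivial if it is nontrivial on some party
(i.e. it is not the identity term). -/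
def NontrivialTerm (t : ∀ p, ιI p × ιO p) : Prop :=
  ∃ p, ¬ TrivialAt t p

/-- The Oreshkov–Giarmatzi condition on Hilbert–Schmidt coefficients: every nonzero
nontrivial term is in type on at least one party. -/
def OGCoeffs (w : (∀ p, ιI p × ιO p) → ℝ) : Prop :=
  ∀ t, w t ≠ 0 → NontrivialTerm t → ∃ p, InTypeAt t p

end types

section process

variable {I O : P → Type*} [∀ p, Fintype (I p)] [∀ p, DecidableEq (I p)]
  [∀ p, Fintype (O p)] [∀ p, DecidableEq (O p)]
  {ιI ιO : P → Type*} [∀ p, Fintype (ιI p)] [∀ p, Zero (ιI p)]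
  [∀ p, Fintype (ιO p)] [∀ p, Zero (ιO p)]

/-- `W` is a valid process with Hilbert–Schmidt coefficients `w` (relative to the
Hilbert–Schmidt bases `σI`, `σO`): it is positive semidefinite, has trace equal to the
product `d_O` of the output dimensions, has expansion given by `w`, and every nonzero
nontrivial Hilbert–Schmidt term of it is in type on at least one party. -/
def IsProcessWith (σI : ∀ p, ιI p → Matrix (I p) (I p) ℂ)
    (σO : ∀ p, ιO p → Matrix (O p) (O p) ℂ)
    (W : Matrix ((p : P) → I p × O p) ((p : P) → I p × O p) ℂ)
    (w : (∀ p, ιI p × ιO p) → ℝ) : Prop :=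
  W.PosSemidef ∧
  W.trace = ∏ p, (Fintype.card (O p) : ℂ) ∧
  W = expand σI σO w ∧
  OGCoeffs w

/-- `W` is a valid process (relative to the Hilbert–Schmidt bases `σI`, `σO`). -/
def IsProcess (σI : ∀ p, ιI p → Matrix (I p) (I p) ℂ)
    (σO : ∀ p, ιO p → Matrix (O p) (O p) ℂ)
    (W : Matrix ((p : P) → I p × O p) ((p : P) → I p × O p) ℂ) : Prop :=
  ∃ w, IsProcessWith σI σO W w

end process

section product

variable {I' O' I'' O'' : P → Type*}

/-- The tensor product `P = W ⊗ Z` of an operator `W` for parties `A', B', …` and an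
operator `Z` for parties `A'', B'', …`, regarded as an operator for the combined
parties `A = A'A''` (input `a₁ = a₁'a₁''`, output `a₂ = a₂'a₂''`), `B = B'B''`, …. -/
def prodOp (W : Matrix ((p : P) → I' p × O' p) ((p : P) → I' p × O' p) ℂ)
    (Z : Matrix ((p : P) → I'' p × O'' p) ((p : P) → I'' p × O'' p) ℂ) :
    Matrix ((p : P) → (I' p × I'' p) × (O' p × O'' p))
      ((p : P) → (I' p × I'' p) × (O' p × O'' p)) ℂ :=
  fun x y =>
    W (fun p => ((x p).1.1, (x p).2.1)) (fun p => ((y p).1.1, (y p).2.1)) *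
    Z (fun p => ((x p).1.2, (x p).2.2)) (fun p => ((y p).1.2, (y p).2.2))

end product

/-- The Hilbert–Schmidt basis of a combined system, consisting of the tensor (Kronecker)
products of the basis elements of the two subsystems; its distinguished (identity)
element is the product of the two distinguished elements. -/
def prodBasis {n n' ι ι' : Type*} (σ : ι → Matrix n n ℂ) (σ' : ι' → Matrix n' n' ℂ) :
    ι × ι' → Matrix (n × n') (n × n') ℂ :=
  fun i => σ i.1 ⊗ₖ σ' i.2

section coeffs

variable {ιI' ιO' ιI'' ιO'' : P → Type*}

/-- The Hilbert–Schmidt coefficients of a tensor product `W ⊗ Z` in terms of the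
coefficients `w` of `W` and `z` of `Z`. -/
def prodCoeffs (w : (∀ p, ιI' p × ιO' p) → ℝ) (z : (∀ p, ιI'' p × ιO'' p) → ℝ) :
    (∀ p, (ιI' p × ιI'' p) × (ιO' p × ιO'' p)) → ℝ :=
  fun u => w (fun p => ((u p).1.1, (u p).2.1)) * z (fun p => ((u p).1.2, (u p).2.2))

/-- The multi-index of the tensor product of the term `t` of `W` and the term `s`
of `Z`, as a term for the combined parties. -/
def combineTerm (t : ∀ p, ιI' p × ιO' p) (s : ∀ p, ιI'' p × ιO'' p) :
    ∀ p, (ιI' p × ιI'' p) × (ιO' p × ιO'' p) :=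
  fun p => (((t p).1, (s p).1), ((t p).2, (s p).2))

end coeffs

section twoparty

variable {ιI ιO : Fin 2 → Type*} [∀ p, Zero (ιI p)] [∀ p, Zero (ιO p)]

/-- For two parties `A` (party `0`) and `B` (party `1`), an `A` to `B` signalling
term: a term of type `a₂b₁` or `a₁a₂b₁`, i.e. nontrivial on `a₂` and on `b₁` and
trivial on `b₂`. -/
def AtoBSig (t : ∀ p, ιI p × ιO p) : Prop :=
  (t 0).2 ≠ 0 ∧ (t 1).1 ≠ 0 ∧ (t 1).2 = 0

/-- A `B` to `A` signalling term: a term of type `a₁b₂` or `a₁b₁b₂`, i.e. nontrivial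
on `b₂` and on `a₁` and trivial on `a₂`. -/
def BtoASig (t : ∀ p, ιI p × ιO p) : Prop :=
  (t 1).2 ≠ 0 ∧ (t 0).1 ≠ 0 ∧ (t 0).2 = 0

end twoparty

/-! ### Auxiliary lemmas for the proof of `statement5` -/

section Auxiliary

set_option linter.unusedSectionVars false

lemma key_sum_prod {β : P → Type*} [∀ p, Fintype (β p)] (f : ∀ p, β p → ℂ) :
    ∑ x : ∀ p, β p, ∏ p, f p (x p) = ∏ p, ∑ b, f p b :=
  (Fintype.prod_sum f).symm

variable {I O : P → Type*} [∀ p, Fintype (I p)] [∀ p, DecidableEq (I p)]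
  [∀ p, Fintype (O p)] [∀ p, DecidableEq (O p)]
  {ιI ιO : P → Type*} [∀ p, Fintype (ιI p)] [∀ p, Zero (ιI p)]
  [∀ p, Fintype (ιO p)] [∀ p, Zero (ιO p)]

lemma tensorFamily_mul (M N : ∀ p, Matrix (I p × O p) (I p × O p) ℂ) :
    tensorFamily M * tensorFamily N = tensorFamily (fun p => M p * N p) := by
  funext x y
  rw [Matrix.mul_apply]
  simp only [tensorFamily]
  rw [show (∏ p, (M p * N p) (x p) (y p))
        = ∑ j : ∀ p, I p × O p, ∏ p, M p (x p) (j p) * N p (j p) (y p) by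
      simp_rw [Matrix.mul_apply]; exact Fintype.prod_sum _]
  exact Finset.sum_congr rfl fun j _ => Finset.prod_mul_distrib.symm

lemma tensorFamily_trace (M : ∀ p, Matrix (I p × O p) (I p × O p) ℂ) :
    (tensorFamily M).trace = ∏ p, (M p).trace := by
  simp only [Matrix.trace, Matrix.diag, tensorFamily]
  exact key_sum_prod fun p a => M p a a

lemma hsTerm_eq_tensorFamily (σI : ∀ p, ιI p → Matrix (I p) (I p) ℂ)
    (σO : ∀ p, ιO p → Matrix (O p) (O p) ℂ) (t : ∀ p, ιI p × ιO p) :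
    hsTerm σI σO t = tensorFamily (fun p => σI p (t p).1 ⊗ₖ σO p (t p).2) := by
  funext x y
  simp [hsTerm, tensorFamily, Matrix.kroneckerMap_apply]

lemma trace_hsTerm_mul (σI : ∀ p, ιI p → Matrix (I p) (I p) ℂ)
    (σO : ∀ p, ιO p → Matrix (O p) (O p) ℂ) (t t' : ∀ p, ιI p × ιO p) :
    (hsTerm σI σO t * hsTerm σI σO t').trace
      = ∏ p, ((σI p (t p).1 * σI p (t' p).1).trace *
          (σO p (t p).2 * σO p (t' p).2).trace) := by
  rw [hsTerm_eq_tensorFamily, hsTerm_eq_tensorFamily, tensorFamily_mul, tensorFamily_trace]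
  exact Finset.prod_congr rfl fun p _ => by
    rw [← Matrix.mul_kronecker_mul, Matrix.trace_kronecker]

lemma trace_mul_self_ne_zero {n : Type*} [Fintype n] [DecidableEq n] {A : Matrix n n ℂ}
    (hA : A.IsHermitian) (h0 : A ≠ 0) : (A * A).trace ≠ 0 := by
  have h1 : (A * A).trace = ((∑ i, ∑ j, Complex.normSq (A j i) : ℝ) : ℂ) := by
    nth_rewrite 1 [← hA]
    simp only [Matrix.trace, Matrix.diag, Matrix.mul_apply, Matrix.conjTranspose_apply]
    push_cast
    refine Finset.sum_congr rfl fun i _ => Finset.sum_congr rfl fun j _ => ?_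
    rw [Complex.normSq_eq_conj_mul_self]
    rfl
  rw [h1, Complex.ofReal_ne_zero]
  have hex : ∃ j i, A j i ≠ 0 := by
    by_contra hc
    push_neg at hc
    exact h0 (Matrix.ext fun j i => hc j i)
  obtain ⟨j0, i0, hji⟩ := hex
  refine ne_of_gt (Finset.sum_pos'
    (fun i _ => Finset.sum_nonneg fun j _ => Complex.normSq_nonneg _)
    ⟨i0, Finset.mem_univ _, Finset.sum_pos' (fun j _ => Complex.normSq_nonneg _)
      ⟨j0, Finset.mem_univ _, Complex.normSq_pos.mpr hji⟩⟩)

lemma trace_expand_mul_hsTerm (σI : ∀ p, ιI p → Matrix (I p) (I p) ℂ)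
    (σO : ∀ p, ιO p → Matrix (O p) (O p) ℂ) (c : (∀ p, ιI p × ιO p) → ℝ)
    (t : ∀ p, ιI p × ιO p) :
    (expand σI σO c * hsTerm σI σO t).trace
      = ∑ s, (c s : ℂ) * (hsTerm σI σO s * hsTerm σI σO t).trace := by
  rw [expand, Finset.sum_mul, Matrix.trace_sum]
  exact Finset.sum_congr rfl fun s _ => by
    rw [Matrix.smul_mul, Matrix.trace_smul, smul_eq_mul]

lemma expand_injective (σI : ∀ p, ιI p → Matrix (I p) (I p) ℂ)
    (σO : ∀ p, ιO p → Matrix (O p) (O p) ℂ)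
    (horthI : ∀ p (i j : ιI p), i ≠ j → (σI p i * σI p j).trace = 0)
    (horthO : ∀ p (i j : ιO p), i ≠ j → (σO p i * σO p j).trace = 0)
    (hsqI : ∀ p (i : ιI p), (σI p i * σI p i).trace ≠ 0)
    (hsqO : ∀ p (i : ιO p), (σO p i * σO p i).trace ≠ 0)
    {c c' : (∀ p, ιI p × ιO p) → ℝ} (h : expand σI σO c = expand σI σO c') : c = c' := by
  funext t
  have hD : ∀ s, s ≠ t → (hsTerm σI σO s * hsTerm σI σO t).trace = 0 := by
    intro s hs
    rw [trace_hsTerm_mul]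
    have hex : ∃ p, s p ≠ t p := by
      by_contra hc; push_neg at hc; exact hs (funext hc)
    obtain ⟨p, hp⟩ := hex
    refine Finset.prod_eq_zero (Finset.mem_univ p) ?_
    by_cases h1 : (s p).1 = (t p).1
    · have h2 : (s p).2 ≠ (t p).2 := fun h2 => hp (Prod.ext h1 h2)
      rw [horthO p _ _ h2, mul_zero]
    · rw [horthI p _ _ h1, zero_mul]
  have hDt : (hsTerm σI σO t * hsTerm σI σO t).trace ≠ 0 := by
    rw [trace_hsTerm_mul]
    exact Finset.prod_ne_zero_iff.mpr fun p _ => mul_ne_zero (hsqI p _) (hsqO p _)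
  have e1 := congrArg (fun M => (M * hsTerm σI σO t).trace) h
  simp only [trace_expand_mul_hsTerm] at e1
  rw [Finset.sum_eq_single t (fun s _ hs => by rw [hD s hs, mul_zero]) (by simp),
    Finset.sum_eq_single t (fun s _ hs => by rw [hD s hs, mul_zero]) (by simp)] at e1
  exact_mod_cast mul_right_cancel₀ hDt e1

end Auxiliary

section ProdAux

set_option linter.unusedSectionVars false

/-- Splitting a family of pairs-of-pairs into two families of pairs. -/
def splitPi {α β γ δ : P → Type*} :
    (∀ p, (α p × β p) × (γ p × δ p)) ≃ (∀ p, α p × γ p) × (∀ p, β p × δ p) where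
  toFun u := (fun p => ((u p).1.1, (u p).2.1), fun p => ((u p).1.2, (u p).2.2))
  invFun v := fun p => (((v.1 p).1, (v.2 p).1), ((v.1 p).2, (v.2 p).2))
  left_inv u := rfl
  right_inv v := rfl

variable {I' O' I'' O'' : P → Type*}
  [∀ p, Fintype (I' p)] [∀ p, DecidableEq (I' p)]
  [∀ p, Fintype (O' p)] [∀ p, DecidableEq (O' p)]
  [∀ p, Fintype (I'' p)] [∀ p, DecidableEq (I'' p)]
  [∀ p, Fintype (O'' p)] [∀ p, DecidableEq (O'' p)]

lemma prodOp_trace (W : Matrix ((p : P) → I' p × O' p) ((p : P) → I' p × O' p) ℂ)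
    (Z : Matrix ((p : P) → I'' p × O'' p) ((p : P) → I'' p × O'' p) ℂ) :
    (prodOp W Z).trace = W.trace * Z.trace := by
  simp only [Matrix.trace, Matrix.diag, prodOp]
  rw [Finset.sum_mul_sum, ← Fintype.sum_prod_type']
  exact Fintype.sum_equiv (splitPi (α := I') (β := I'') (γ := O') (δ := O'')) _ _
    fun x => rfl

lemma prodOp_conjTranspose_mul
    (A : Matrix ((p : P) → I' p × O' p) ((p : P) → I' p × O' p) ℂ)
    (B : Matrix ((p : P) → I'' p × O'' p) ((p : P) → I'' p × O'' p) ℂ) :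
    prodOp (Aᴴ * A) (Bᴴ * B) = (prodOp A B)ᴴ * (prodOp A B) := by
  funext x y
  simp only [prodOp, Matrix.mul_apply, Matrix.conjTranspose_apply, star_mul']
  rw [Finset.sum_mul_sum, ← Fintype.sum_prod_type']
  exact (Fintype.sum_equiv (splitPi (α := I') (β := I'') (γ := O') (δ := O'')) _ _
    fun k => by simp only [splitPi, Equiv.coe_fn_mk]; ring).symm

lemma prodOp_expand {ιI' ιO' ιI'' ιO'' : P → Type*}
    [∀ p, Fintype (ιI' p)] [∀ p, Zero (ιI' p)] [∀ p, Fintype (ιO' p)] [∀ p, Zero (ιO' p)]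
    [∀ p, Fintype (ιI'' p)] [∀ p, Zero (ιI'' p)] [∀ p, Fintype (ιO'' p)] [∀ p, Zero (ιO'' p)]
    (σI' : ∀ p, ιI' p → Matrix (I' p) (I' p) ℂ)
    (σO' : ∀ p, ιO' p → Matrix (O' p) (O' p) ℂ)
    (σI'' : ∀ p, ιI'' p → Matrix (I'' p) (I'' p) ℂ)
    (σO'' : ∀ p, ιO'' p → Matrix (O'' p) (O'' p) ℂ)
    (w : (∀ p, ιI' p × ιO' p) → ℝ) (z : (∀ p, ιI'' p × ιO'' p) → ℝ) :
    prodOp (expand σI' σO' w) (expand σI'' σO'' z)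
      = expand (fun p => prodBasis (σI' p) (σI'' p))
          (fun p => prodBasis (σO' p) (σO'' p)) (prodCoeffs w z) := by
  funext x y
  simp only [prodOp, expand, Matrix.sum_apply, Matrix.smul_apply, smul_eq_mul]
  rw [Finset.sum_mul_sum, ← Fintype.sum_prod_type']
  refine (Fintype.sum_equiv (splitPi (α := ιI') (β := ιI'') (γ := ιO') (δ := ιO'')) _ _
    fun u => ?_).symm
  simp only [prodCoeffs, hsTerm, prodBasis, Matrix.kroneckerMap_apply, splitPi,
    Equiv.coe_fn_mk]
  push_cast
  rw [show (∏ p, σI' p (u p).1.1 (x p).1.1 (y p).1.1 * σI'' p (u p).1.2 (x p).1.2 (y p).1.2 *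
        (σO' p (u p).2.1 (x p).2.1 (y p).2.1 * σO'' p (u p).2.2 (x p).2.2 (y p).2.2))
      = (∏ p, σI' p (u p).1.1 (x p).1.1 (y p).1.1 * σO' p (u p).2.1 (x p).2.1 (y p).2.1) *
        ∏ p, σI'' p (u p).1.2 (x p).1.2 (y p).1.2 * σO'' p (u p).2.2 (x p).2.2 (y p).2.2 by
    rw [← Finset.prod_mul_distrib]; exact Finset.prod_congr rfl fun p _ => by ring]
  ring

end ProdAux

section BasisAux

lemma prod_eq_zero_iff' {α β : Type*} [Zero α] [Zero β] (a : α × β) :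
    a = 0 ↔ a.1 = 0 ∧ a.2 = 0 := by
  rw [Prod.ext_iff]; simp

lemma prodBasis_orth {n n' ι ι' : Type*} [Fintype n] [DecidableEq n] [Fintype n']
    [DecidableEq n'] {σ : ι → Matrix n n ℂ} {σ' : ι' → Matrix n' n' ℂ}
    (ho : ∀ i j, i ≠ j → (σ i * σ j).trace = 0)
    (ho' : ∀ i j, i ≠ j → (σ' i * σ' j).trace = 0) :
    ∀ (i j : ι × ι'), i ≠ j → (prodBasis σ σ' i * prodBasis σ σ' j).trace = 0 := by
  intro i j hij
  simp only [prodBasis]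
  rw [← Matrix.mul_kronecker_mul, Matrix.trace_kronecker]
  by_cases h1 : i.1 = j.1
  · rw [ho' _ _ fun h2 => hij (Prod.ext h1 h2), mul_zero]
  · rw [ho _ _ h1, zero_mul]

lemma prodBasis_sq_ne {n n' ι ι' : Type*} [Fintype n] [DecidableEq n] [Fintype n']
    [DecidableEq n'] {σ : ι → Matrix n n ℂ} {σ' : ι' → Matrix n' n' ℂ}
    (h : ∀ i, (σ i * σ i).trace ≠ 0) (h' : ∀ i, (σ' i * σ' i).trace ≠ 0) :
    ∀ i : ι × ι', (prodBasis σ σ' i * prodBasis σ σ' i).trace ≠ 0 := by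
  intro i
  simp only [prodBasis]
  rw [← Matrix.mul_kronecker_mul, Matrix.trace_kronecker]
  exact mul_ne_zero (h _) (h' _)

end BasisAux

section Combo

variable {κI' κO' κI'' κO'' : Fin 2 → Type*}
  [∀ p, Zero (κI' p)] [∀ p, Zero (κO' p)] [∀ p, Zero (κI'' p)] [∀ p, Zero (κO'' p)]

lemma not_og_of_sig {w : (∀ p, κI' p × κO' p) → ℝ} {z : (∀ p, κI'' p × κO'' p) → ℝ}
    {t : ∀ p, κI' p × κO' p} {s : ∀ p, κI'' p × κO'' p}
    (hwt : w t ≠ 0) (hzs : z s ≠ 0)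
    (h : (AtoBSig t ∧ BtoASig s) ∨ (BtoASig t ∧ AtoBSig s)) :
    ¬ OGCoeffs (prodCoeffs w z) := by
  intro hog
  set u : ∀ p : Fin 2, (κI' p × κI'' p) × (κO' p × κO'' p) :=
    fun p => (((t p).1, (s p).1), ((t p).2, (s p).2)) with hu
  have hcu : prodCoeffs w z u ≠ 0 := mul_ne_zero hwt hzs
  have hnt : NontrivialTerm u := by
    rcases h with ⟨⟨ht2, _, _⟩, _⟩ | ⟨⟨_, ht01, _⟩, _⟩
    · exact ⟨0, fun htr => ht2 ((prod_eq_zero_iff' _).mp htr.2).1⟩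
    · exact ⟨0, fun htr => ht01 ((prod_eq_zero_iff' _).mp htr.1).1⟩
  obtain ⟨p, hin⟩ := hog u hcu hnt
  rcases h with ⟨⟨ht02, _, _⟩, ⟨hs12, _, _⟩⟩ | ⟨⟨ht12, _, _⟩, ⟨hs02, _, _⟩⟩ <;> fin_cases p
  · exact ht02 ((prod_eq_zero_iff' _).mp hin.2).1
  · exact hs12 ((prod_eq_zero_iff' _).mp hin.2).2
  · exact hs02 ((prod_eq_zero_iff' _).mp hin.2).2
  · exact ht12 ((prod_eq_zero_iff' _).mp hin.2).1

lemma combo_pair {w : (∀ p, κI' p × κO' p) → ℝ} {z : (∀ p, κI'' p × κO'' p) → ℝ}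
    (h : ((∃ t, w t ≠ 0 ∧ (AtoBSig t ∨ BtoASig t)) ∧
         (∃ s, z s ≠ 0 ∧ (AtoBSig s ∨ BtoASig s))) ∧
        ((∃ t, w t ≠ 0 ∧ AtoBSig t) ∨ (∃ s, z s ≠ 0 ∧ AtoBSig s)) ∧
        ((∃ t, w t ≠ 0 ∧ BtoASig t) ∨ (∃ s, z s ≠ 0 ∧ BtoASig s))) :
    ∃ t s, w t ≠ 0 ∧ z s ≠ 0 ∧ ((AtoBSig t ∧ BtoASig s) ∨ (BtoASig t ∧ AtoBSig s)) := by
  obtain ⟨⟨⟨t0, hwt0, ht0⟩, ⟨s0, hzs0, hs0⟩⟩, hAB, hBA⟩ := h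
  rcases hAB with ⟨t1, hwt1, hab⟩ | ⟨s1, hzs1, hab⟩ <;>
    rcases hBA with ⟨t2, hwt2, hba⟩ | ⟨s2, hzs2, hba⟩
  · rcases hs0 with hsab | hsba
    · exact ⟨t2, s0, hwt2, hzs0, Or.inr ⟨hba, hsab⟩⟩
    · exact ⟨t1, s0, hwt1, hzs0, Or.inl ⟨hab, hsba⟩⟩
  · exact ⟨t1, s2, hwt1, hzs2, Or.inl ⟨hab, hba⟩⟩
  · exact ⟨t2, s1, hwt2, hzs1, Or.inr ⟨hba, hab⟩⟩
  · rcases ht0 with htab | htba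
    · exact ⟨t0, s2, hwt0, hzs2, Or.inl ⟨htab, hba⟩⟩
    · exact ⟨t0, s1, hwt0, hzs1, Or.inr ⟨htba, hab⟩⟩

lemma combo_forward {w : (∀ p, κI' p × κO' p) → ℝ} {z : (∀ p, κI'' p × κO'' p) → ℝ}
    (hWog : OGCoeffs w) (hZog : OGCoeffs z) (hbad : ¬ OGCoeffs (prodCoeffs w z)) :
    ((∃ t, w t ≠ 0 ∧ (AtoBSig t ∨ BtoASig t)) ∧
         (∃ s, z s ≠ 0 ∧ (AtoBSig s ∨ BtoASig s))) ∧
        ((∃ t, w t ≠ 0 ∧ AtoBSig t) ∨ (∃ s, z s ≠ 0 ∧ AtoBSig s)) ∧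
        ((∃ t, w t ≠ 0 ∧ BtoASig t) ∨ (∃ s, z s ≠ 0 ∧ BtoASig s)) := by
  rw [OGCoeffs] at hbad
  push_neg at hbad
  obtain ⟨u, hcu, hnt, hnit⟩ := hbad
  set t : ∀ p, κI' p × κO' p := fun p => ((u p).1.1, (u p).2.1) with hts
  set s : ∀ p, κI'' p × κO'' p := fun p => ((u p).1.2, (u p).2.2) with hss
  have hcu' : w t * z s ≠ 0 := hcu
  obtain ⟨hwt, hzs⟩ := mul_ne_zero_iff.mp hcu'
  have hu1 : ∀ p, (u p).1 = 0 ↔ (t p).1 = 0 ∧ (s p).1 = 0 := fun p => prod_eq_zero_iff' _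
  have hu2 : ∀ p, (u p).2 = 0 ↔ (t p).2 = 0 ∧ (s p).2 = 0 := fun p => prod_eq_zero_iff' _
  have hnit' : ∀ p, (u p).1 ≠ 0 → (u p).2 ≠ 0 := by
    intro p
    have := hnit p
    rw [InTypeAt] at this
    push_neg at this
    exact this
  by_cases httriv : ∀ p, TrivialAt t p
  · by_cases hstriv : ∀ p, TrivialAt s p
    · exfalso
      obtain ⟨p, hp⟩ := hnt
      exact hp ⟨(hu1 p).mpr ⟨(httriv p).1, (hstriv p).1⟩,
        (hu2 p).mpr ⟨(httriv p).2, (hstriv p).2⟩⟩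
    · exfalso
      push_neg at hstriv
      obtain ⟨p, hin⟩ := hZog s hzs hstriv
      refine hnit p ⟨fun h0 => hin.1 ((hu1 p).mp h0).2, (hu2 p).mpr ⟨(httriv p).2, hin.2⟩⟩
  · by_cases hstriv : ∀ p, TrivialAt s p
    · exfalso
      push_neg at httriv
      obtain ⟨p, hin⟩ := hWog t hwt httriv
      refine hnit p ⟨fun h0 => hin.1 ((hu1 p).mp h0).1, (hu2 p).mpr ⟨hin.2, (hstriv p).2⟩⟩
    · push_neg at httriv
      push_neg at hstriv
      obtain ⟨pt, hint⟩ := hWog t hwt httriv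
      obtain ⟨ps, hins⟩ := hZog s hzs hstriv
      fin_cases pt <;> fin_cases ps
      · exact absurd ⟨fun h0 => hint.1 ((hu1 0).mp h0).1,
          (hu2 0).mpr ⟨hint.2, hins.2⟩⟩ (hnit 0)
      · -- t in type at 0, s in type at 1
        have hs02 : (s 0).2 ≠ 0 := by
          intro h
          exact hnit' 0 (fun h0 => hint.1 ((hu1 0).mp h0).1) ((hu2 0).mpr ⟨hint.2, h⟩)
        have ht12 : (t 1).2 ≠ 0 := by
          intro h
          exact hnit' 1 (fun h0 => hins.1 ((hu1 1).mp h0).2) ((hu2 1).mpr ⟨h, hins.2⟩)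
        have hBA : BtoASig t := ⟨ht12, hint.1, hint.2⟩
        have hAB : AtoBSig s := ⟨hs02, hins.1, hins.2⟩
        exact ⟨⟨⟨t, hwt, Or.inr hBA⟩, ⟨s, hzs, Or.inl hAB⟩⟩,
          Or.inr ⟨s, hzs, hAB⟩, Or.inl ⟨t, hwt, hBA⟩⟩
      · -- t in type at 1, s in type at 0
        have ht02 : (t 0).2 ≠ 0 := by
          intro h
          exact hnit' 0 (fun h0 => hins.1 ((hu1 0).mp h0).2) ((hu2 0).mpr ⟨h, hins.2⟩)
        have hs12 : (s 1).2 ≠ 0 := by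
          intro h
          exact hnit' 1 (fun h0 => hint.1 ((hu1 1).mp h0).1) ((hu2 1).mpr ⟨hint.2, h⟩)
        have hAB : AtoBSig t := ⟨ht02, hint.1, hint.2⟩
        have hBA : BtoASig s := ⟨hs12, hins.1, hins.2⟩
        exact ⟨⟨⟨t, hwt, Or.inl hAB⟩, ⟨s, hzs, Or.inr hBA⟩⟩,
          Or.inl ⟨t, hwt, hAB⟩, Or.inr ⟨s, hzs, hBA⟩⟩
      · exact absurd ⟨fun h0 => hint.1 ((hu1 1).mp h0).1,
          (hu2 1).mpr ⟨hint.2, hins.2⟩⟩ (hnit 1)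

end Combo


variable {I' O' I'' O'' : Fin 2 → Type*}
  [∀ p, Fintype (I' p)] [∀ p, DecidableEq (I' p)]
  [∀ p, Fintype (O' p)] [∀ p, DecidableEq (O' p)]
  [∀ p, Fintype (I'' p)] [∀ p, DecidableEq (I'' p)]
  [∀ p, Fintype (O'' p)] [∀ p, DecidableEq (O'' p)]
  {ιI' ιO' ιI'' ιO'' : Fin 2 → Type*}
  [∀ p, Fintype (ιI' p)] [∀ p, Zero (ιI' p)]
  [∀ p, Fintype (ιO' p)] [∀ p, Zero (ιO' p)]
  [∀ p, Fintype (ιI'' p)] [∀ p, Zero (ιI'' p)]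
  [∀ p, Fintype (ιO'' p)] [∀ p, Zero (ιO'' p)]

section Statement5

/-- **Two-party corollary.** Let `W` be a process on the two parties `A'`, `B'` and `Z`
a process on the two parties `A''`, `B''` (with Hilbert–Schmidt coefficients `w`, `z`;
party `0` is the `A`-type party and party `1` the `B`-type party). The product
`P = W ⊗ Z` for the combined parties `A = A'A''` and `B = B'B''` is NOT a valid
process if and only if: (1) both `W` and `Z` contain nonzero signalling terms; and
(2) the Hilbert–Schmidt terms of `W` and `Z` taken together contain signalling terms
of both directions (at least one `A`-to-`B` signalling term and at least one
`B`-to-`A` signalling term among the nonzero terms of `W` and `Z`). -/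
theorem statement5
    (σI' : ∀ p, ιI' p → Matrix (I' p) (I' p) ℂ)
    (σO' : ∀ p, ιO' p → Matrix (O' p) (O' p) ℂ)
    (σI'' : ∀ p, ιI'' p → Matrix (I'' p) (I'' p) ℂ)
    (σO'' : ∀ p, ιO'' p → Matrix (O'' p) (O'' p) ℂ)
    (hσI' : ∀ p, IsHSBasis (σI' p)) (hσO' : ∀ p, IsHSBasis (σO' p))
    (hσI'' : ∀ p, IsHSBasis (σI'' p)) (hσO'' : ∀ p, IsHSBasis (σO'' p))
    (W : Matrix ((p : Fin 2) → I' p × O' p) ((p : Fin 2) → I' p × O' p) ℂ)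
    (Z : Matrix ((p : Fin 2) → I'' p × O'' p) ((p : Fin 2) → I'' p × O'' p) ℂ)
    (w : (∀ p, ιI' p × ιO' p) → ℝ) (z : (∀ p, ιI'' p × ιO'' p) → ℝ)
    (hW : IsProcessWith σI' σO' W w) (hZ : IsProcessWith σI'' σO'' Z z) :
    ¬ IsProcess (fun p => prodBasis (σI' p) (σI'' p))
        (fun p => prodBasis (σO' p) (σO'' p)) (prodOp W Z)
      ↔ ((∃ t, w t ≠ 0 ∧ (AtoBSig t ∨ BtoASig t)) ∧
         (∃ s, z s ≠ 0 ∧ (AtoBSig s ∨ BtoASig s))) ∧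
        ((∃ t, w t ≠ 0 ∧ AtoBSig t) ∨ (∃ s, z s ≠ 0 ∧ AtoBSig s)) ∧
        ((∃ t, w t ≠ 0 ∧ BtoASig t) ∨ (∃ s, z s ≠ 0 ∧ BtoASig s)) := by
  obtain ⟨hWpsd, hWtr, hWexp, hWog⟩ := hW
  obtain ⟨hZpsd, hZtr, hZexp, hZog⟩ := hZ
  have hexp : prodOp W Z
      = expand (fun p => prodBasis (σI' p) (σI'' p))
          (fun p => prodBasis (σO' p) (σO'' p)) (prodCoeffs w z) := by
    rw [hWexp, hZexp, prodOp_expand]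
  have hpsd : (prodOp W Z).PosSemidef := by
    obtain ⟨A, hA⟩ : ∃ A, W = Aᴴ * A := by
      open scoped MatrixOrder Matrix.Norms.L2Operator in
      exact CStarAlgebra.nonneg_iff_eq_star_mul_self.mp hWpsd.nonneg
    obtain ⟨B, hB⟩ : ∃ B, Z = Bᴴ * B := by
      open scoped MatrixOrder Matrix.Norms.L2Operator in
      exact CStarAlgebra.nonneg_iff_eq_star_mul_self.mp hZpsd.nonneg
    rw [hA, hB, prodOp_conjTranspose_mul]
    exact Matrix.posSemidef_conjTranspose_mul_self _
  have htr : (prodOp W Z).trace = ∏ p : Fin 2, (Fintype.card (O' p × O'' p) : ℂ) := by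
    rw [prodOp_trace, hWtr, hZtr, ← Finset.prod_mul_distrib]
    exact Finset.prod_congr rfl fun p _ => by rw [Fintype.card_prod]; push_cast; ring
  have horthI : ∀ p (i j : ιI' p × ιI'' p), i ≠ j →
      (prodBasis (σI' p) (σI'' p) i * prodBasis (σI' p) (σI'' p) j).trace = 0 := fun p =>
    prodBasis_orth ((hσI' p).2.2.2.2.1) ((hσI'' p).2.2.2.2.1)
  have horthO : ∀ p (i j : ιO' p × ιO'' p), i ≠ j →
      (prodBasis (σO' p) (σO'' p) i * prodBasis (σO' p) (σO'' p) j).trace = 0 := fun p =>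
    prodBasis_orth ((hσO' p).2.2.2.2.1) ((hσO'' p).2.2.2.2.1)
  have hsqI : ∀ p (i : ιI' p × ιI'' p),
      (prodBasis (σI' p) (σI'' p) i * prodBasis (σI' p) (σI'' p) i).trace ≠ 0 := fun p =>
    prodBasis_sq_ne
      (fun i => trace_mul_self_ne_zero ((hσI' p).2.1 i) ((hσI' p).2.2.2.2.2 i))
      (fun i => trace_mul_self_ne_zero ((hσI'' p).2.1 i) ((hσI'' p).2.2.2.2.2 i))
  have hsqO : ∀ p (i : ιO' p × ιO'' p),
      (prodBasis (σO' p) (σO'' p) i * prodBasis (σO' p) (σO'' p) i).trace ≠ 0 := fun p =>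
    prodBasis_sq_ne
      (fun i => trace_mul_self_ne_zero ((hσO' p).2.1 i) ((hσO' p).2.2.2.2.2 i))
      (fun i => trace_mul_self_ne_zero ((hσO'' p).2.1 i) ((hσO'' p).2.2.2.2.2 i))
  have hiff : IsProcess (fun p => prodBasis (σI' p) (σI'' p))
      (fun p => prodBasis (σO' p) (σO'' p)) (prodOp W Z)
      ↔ OGCoeffs (prodCoeffs w z) := by
    constructor
    · rintro ⟨c, _, _, hc3, hc4⟩
      have hc : c = prodCoeffs w z :=
        expand_injective _ _ horthI horthO hsqI hsqO (hc3.symm.trans hexp)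
      rwa [hc] at hc4
    · intro hog
      exact ⟨prodCoeffs w z, hpsd, htr, hexp, hog⟩
  rw [not_congr hiff]
  constructor
  · exact fun hbad => combo_forward hWog hZog hbad
  · intro h
    obtain ⟨t, s, hwt, hzs, hcase⟩ := combo_pair h
    exact not_og_of_sig hwt hzs hcase


end Statement5

end ProcessPaper
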